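/- The derivative of the Lehmer transform is given by $\mathscr{L}'(\breve{s}) = \left[\sum_{i=1}^{n}\sum_{k=i+1}^{n} (h_i - h_k)(\log h_i - \log h_k)(h_i h_k)^{\breve{s}-1}\right] \Big/ \left(\sum_{i=1}^{n} h_i^{\breve{s}-1}\right)^{2}$ for every $\breve{s} \in \mathbb{R}$. -/

import Mathlib

open Finset

lemma sum_sym_pairs {n : ℕ} (F : Fin n → Fin n → ℝ) (hd : ∀ i, F i i = 0) :
    ∑ i : Fin n, ∑ k : Fin n, F i k
      = ∑ i : Fin n, ∑ k ∈ Finset.Ioi i, (F i k + F k i) := by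
  have h1 : ∀ i : Fin n, ∑ k, F i k
      = ∑ k ∈ Finset.Iio i, F i k + ∑ k ∈ Finset.Ioi i, F i k := by
    intro i
    rw [← Finset.sum_filter_add_sum_filter_not Finset.univ (· < i)]
    congr 1
    · apply Finset.sum_congr _ (fun _ _ => rfl)
      ext k; simp
    · rw [show Finset.univ.filter (fun k => ¬ k < i) = insert i (Finset.Ioi i) from ?_,
        Finset.sum_insert (by simp), hd, zero_add]
      ext k
      simp [not_lt, le_iff_lt_or_eq, or_comm, eq_comm]
  simp_rw [h1, Finset.sum_add_distrib]
  rw [add_comm]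
  congr 1
  exact Finset.sum_comm' (s := Finset.univ) (t := fun i => Finset.Iio i)
    (t' := Finset.univ) (s' := fun k => Finset.Ioi k) (f := F)
    (fun i k => by simp [Finset.mem_Iio, Finset.mem_Ioi])

theorem lehmer_hasDerivAt (n : ℕ) (hn : 1 ≤ n) (h : Fin n → ℝ)
    (hpos : ∀ i, 0 < h i) (s : ℝ) :
    HasDerivAt (fun t : ℝ => (∑ i : Fin n, h i ^ t) / (∑ i : Fin n, h i ^ (t - 1)))
      ((∑ i : Fin n, ∑ k ∈ Finset.Ioi i,
          (h i - h k) * (Real.log (h i) - Real.log (h k)) * (h i * h k) ^ (s - 1)) /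
        (∑ i : Fin n, h i ^ (s - 1)) ^ 2) s := by
  have hne : Nonempty (Fin n) := Fin.pos_iff_nonempty.mp hn
  have hDpos : 0 < ∑ i : Fin n, h i ^ (s - 1) :=
    Finset.sum_pos (fun i _ => Real.rpow_pos_of_pos (hpos i) _) Finset.univ_nonempty
  have hN : HasDerivAt (fun t : ℝ => ∑ i : Fin n, h i ^ t)
      (∑ i : Fin n, h i ^ s * Real.log (h i)) s :=
    HasDerivAt.fun_sum fun i _ => (Real.hasStrictDerivAt_const_rpow (hpos i) s).hasDerivAt
  have hD : HasDerivAt (fun t : ℝ => ∑ i : Fin n, h i ^ (t - 1))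
      (∑ i : Fin n, h i ^ (s - 1) * Real.log (h i)) s := by
    refine HasDerivAt.fun_sum fun i _ => ?_
    have := ((Real.hasStrictDerivAt_const_rpow (hpos i) (s - 1)).hasDerivAt.comp s
      ((hasDerivAt_id s).sub_const 1))
    rw [mul_one] at this
    exact this
  have key := hN.div hD (ne_of_gt hDpos)
  have hs : ∀ i, h i ^ s = h i ^ (s - 1) * h i := by
    intro i
    have t1 : h i ^ (s - 1) * h i ^ (1 : ℝ) = h i ^ (s - 1 + 1) :=
      (Real.rpow_add (hpos i) _ _).symm
    rw [Real.rpow_one, show s - 1 + 1 = s from by ring] at t1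
    exact t1.symm
  have hmul : ∀ i k : Fin n, (h i * h k) ^ (s - 1) = h i ^ (s - 1) * h k ^ (s - 1) :=
    fun i k => Real.mul_rpow (hpos i).le (hpos k).le
  have main :
      (∑ i : Fin n, h i ^ s * Real.log (h i)) * (∑ i : Fin n, h i ^ (s - 1))
        - (∑ i : Fin n, h i ^ s) * (∑ i : Fin n, h i ^ (s - 1) * Real.log (h i))
      = ∑ i : Fin n, ∑ k ∈ Finset.Ioi i,
          (h i - h k) * (Real.log (h i) - Real.log (h k)) * (h i * h k) ^ (s - 1) := by
    rw [Finset.sum_mul_sum, Finset.sum_mul_sum, ← Finset.sum_sub_distrib]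
    simp_rw [← Finset.sum_sub_distrib]
    rw [sum_sym_pairs (fun i k => h i ^ s * Real.log (h i) * h k ^ (s - 1)
        - h i ^ s * (h k ^ (s - 1) * Real.log (h k))) (fun i => by ring)]
    apply Finset.sum_congr rfl
    intro i _
    apply Finset.sum_congr rfl
    intro k _
    rw [hmul, hs i, hs k]
    ring
  rw [← main]
  exact key
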